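/- Let a < c < b and G(z,y) = sinh(min(z,y)-a)·sinh(b-max(z,y))/sinh(b-a). For every continuous f : [a,b] → ℝ that is not identically zero, ∫ₐᵇ ∫ₐᵇ f(z) G(z,y) f(y) dy dz > 0. -/

import Mathlib

open MeasureTheory intervalIntegral Set

noncomputable def inkQ (a : ℝ) (f : ℝ → ℝ) (x : ℝ) : ℝ :=
  ∫ s in a..x, f s * Real.sinh (s - a)

noncomputable def inkP (b : ℝ) (f : ℝ → ℝ) (x : ℝ) : ℝ :=
  ∫ s in x..b, f s * Real.sinh (b - s)

noncomputable def inkU (a b : ℝ) (f : ℝ → ℝ) (x : ℝ) : ℝ :=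
  (Real.sinh (b - x) * inkQ a f x + Real.sinh (x - a) * inkP b f x) / Real.sinh (b - a)

noncomputable def inkV (a b : ℝ) (f : ℝ → ℝ) (x : ℝ) : ℝ :=
  (Real.cosh (x - a) * inkP b f x - Real.cosh (b - x) * inkQ a f x) / Real.sinh (b - a)

section aux

variable {a b : ℝ} {f : ℝ → ℝ}

lemma ink_cont1 (hf : ContinuousOn f (Set.Icc a b)) :
    ContinuousOn (fun s => f s * Real.sinh (s - a)) (Set.Icc a b) :=
  hf.mul ((Real.continuous_sinh.comp (continuous_id.sub continuous_const)).continuousOn)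

lemma ink_cont2 (hf : ContinuousOn f (Set.Icc a b)) :
    ContinuousOn (fun s => f s * Real.sinh (b - s)) (Set.Icc a b) :=
  hf.mul ((Real.continuous_sinh.comp (continuous_const.sub continuous_id)).continuousOn)

lemma inkQ_cont (hab : a ≤ b) (hf : ContinuousOn f (Set.Icc a b)) :
    ContinuousOn (inkQ a f) (Set.Icc a b) := by
  have h : IntegrableOn (fun s => f s * Real.sinh (s - a)) (Set.uIcc a b) := by
    rw [Set.uIcc_of_le hab]
    exact (ink_cont1 hf).integrableOn_Icc
  have := intervalIntegral.continuousOn_primitive_interval h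
  rwa [Set.uIcc_of_le hab] at this

lemma inkP_cont (hab : a ≤ b) (hf : ContinuousOn f (Set.Icc a b)) :
    ContinuousOn (inkP b f) (Set.Icc a b) := by
  have h : IntegrableOn (fun s => f s * Real.sinh (b - s)) (Set.uIcc a b) := by
    rw [Set.uIcc_of_le hab]
    exact (ink_cont2 hf).integrableOn_Icc
  have := intervalIntegral.continuousOn_primitive_interval_left h
  rwa [Set.uIcc_of_le hab] at this

lemma inkU_cont (hab : a ≤ b) (hf : ContinuousOn f (Set.Icc a b)) :
    ContinuousOn (inkU a b f) (Set.Icc a b) := by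
  unfold inkU
  exact (((Real.continuous_sinh.comp (continuous_const.sub continuous_id)).continuousOn.mul
    (inkQ_cont hab hf)).add
    ((Real.continuous_sinh.comp (continuous_id.sub continuous_const)).continuousOn.mul
    (inkP_cont hab hf))).div_const _

lemma inkV_cont (hab : a ≤ b) (hf : ContinuousOn f (Set.Icc a b)) :
    ContinuousOn (inkV a b f) (Set.Icc a b) := by
  unfold inkV
  exact (((Real.continuous_cosh.comp (continuous_id.sub continuous_const)).continuousOn.mul
    (inkP_cont hab hf)).sub
    ((Real.continuous_cosh.comp (continuous_const.sub continuous_id)).continuousOn.mul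
    (inkQ_cont hab hf))).div_const _

lemma inkQ_deriv (hab : a ≤ b) (hf : ContinuousOn f (Set.Icc a b)) {x : ℝ}
    (hx : x ∈ Set.Ioo a b) :
    HasDerivAt (inkQ a f) (f x * Real.sinh (x - a)) x := by
  have hco : ContinuousOn (fun s => f s * Real.sinh (s - a)) (Set.Ioo a b) :=
    (ink_cont1 hf).mono Set.Ioo_subset_Icc_self
  refine intervalIntegral.integral_hasDerivAt_right ?_
    (hco.stronglyMeasurableAtFilter isOpen_Ioo x hx) ?_
  · exact ((ink_cont1 hf).mono (Set.uIcc_subset_Icc ⟨le_refl a, hab⟩ ⟨hx.1.le, hx.2.le⟩)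
      ).intervalIntegrable
  · exact (hf.continuousAt (Icc_mem_nhds hx.1 hx.2)).mul
      ((Real.continuous_sinh.comp (continuous_id.sub continuous_const)).continuousAt)

lemma inkP_deriv (hab : a ≤ b) (hf : ContinuousOn f (Set.Icc a b)) {x : ℝ}
    (hx : x ∈ Set.Ioo a b) :
    HasDerivAt (inkP b f) (-(f x * Real.sinh (b - x))) x := by
  have hco : ContinuousOn (fun s => f s * Real.sinh (b - s)) (Set.Ioo a b) :=
    (ink_cont2 hf).mono Set.Ioo_subset_Icc_self
  refine intervalIntegral.integral_hasDerivAt_left ?_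
    (hco.stronglyMeasurableAtFilter isOpen_Ioo x hx) ?_
  · exact ((ink_cont2 hf).mono (Set.uIcc_subset_Icc ⟨hx.1.le, hx.2.le⟩ ⟨hab, le_refl b⟩)
      ).intervalIntegrable
  · exact (hf.continuousAt (Icc_mem_nhds hx.1 hx.2)).mul
      ((Real.continuous_sinh.comp (continuous_const.sub continuous_id)).continuousAt)

lemma inkU_deriv (hab : a ≤ b) (hf : ContinuousOn f (Set.Icc a b)) {x : ℝ}
    (hx : x ∈ Set.Ioo a b) :
    HasDerivAt (inkU a b f) (inkV a b f x) x := by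
  have h1 : HasDerivAt (fun y => Real.sinh (b - y)) (Real.cosh (b - x) * (0 - 1)) x :=
    ((hasDerivAt_const x b).sub (hasDerivAt_id x)).sinh
  have h2 : HasDerivAt (fun y => Real.sinh (y - a)) (Real.cosh (x - a) * (1 - 0)) x :=
    ((hasDerivAt_id x).sub (hasDerivAt_const x a)).sinh
  have h := (((h1.mul (inkQ_deriv hab hf hx)).add
    (h2.mul (inkP_deriv hab hf hx)))).div_const (Real.sinh (b - a))
  refine h.congr_deriv (Eq.symm ?_)
  unfold inkV
  ring

lemma inkV_deriv (hab : a < b) (hf : ContinuousOn f (Set.Icc a b)) {x : ℝ}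
    (hx : x ∈ Set.Ioo a b) :
    HasDerivAt (inkV a b f) (inkU a b f x - f x) x := by
  have h1 : HasDerivAt (fun y => Real.cosh (y - a)) (Real.sinh (x - a) * (1 - 0)) x :=
    ((hasDerivAt_id x).sub (hasDerivAt_const x a)).cosh
  have h2 : HasDerivAt (fun y => Real.cosh (b - y)) (Real.sinh (b - x) * (0 - 1)) x :=
    ((hasDerivAt_const x b).sub (hasDerivAt_id x)).cosh
  have h := ((h1.mul (inkP_deriv hab.le hf hx)).sub
    (h2.mul (inkQ_deriv hab.le hf hx))).div_const (Real.sinh (b - a))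
  refine h.congr_deriv (Eq.symm ?_)
  have key : Real.sinh (b - a)
      = Real.sinh (b - x) * Real.cosh (x - a) + Real.cosh (b - x) * Real.sinh (x - a) := by
    rw [show b - a = (b - x) + (x - a) by ring, Real.sinh_add]
  have hW : Real.sinh (b - a) ≠ 0 := (Real.sinh_pos_iff.mpr (by linarith)).ne'
  unfold inkU
  field_simp
  rw [key]
  ring

lemma inkU_a : inkU a b f a = 0 := by
  simp [inkU, inkQ]

lemma inkU_b : inkU a b f b = 0 := by
  simp [inkU, inkP]

lemma ink_inner (hab : a ≤ b) (hf : ContinuousOn f (Set.Icc a b)) {z : ℝ}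
    (hz : z ∈ Set.Icc a b) :
    ∫ y in a..b,
        f z * (Real.sinh (min z y - a) * Real.sinh (b - max z y) / Real.sinh (b - a)) * f y
      = f z * inkU a b f z := by
  have hker : Continuous fun y : ℝ =>
      Real.sinh (min z y - a) * Real.sinh (b - max z y) / Real.sinh (b - a) := by
    apply Continuous.div_const
    exact (Real.continuous_sinh.comp ((continuous_const.min continuous_id).sub
      continuous_const)).mul
      (Real.continuous_sinh.comp (continuous_const.sub (continuous_const.max continuous_id)))
  have hint1 : IntervalIntegrable (fun y =>
      f z * (Real.sinh (min z y - a) * Real.sinh (b - max z y) / Real.sinh (b - a)) * f y)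
      MeasureTheory.volume a z := by
    apply ContinuousOn.intervalIntegrable_of_Icc hz.1
    exact (continuousOn_const.mul hker.continuousOn).mul
      (hf.mono (Set.Icc_subset_Icc le_rfl hz.2))
  have hint2 : IntervalIntegrable (fun y =>
      f z * (Real.sinh (min z y - a) * Real.sinh (b - max z y) / Real.sinh (b - a)) * f y)
      MeasureTheory.volume z b := by
    apply ContinuousOn.intervalIntegrable_of_Icc hz.2
    exact (continuousOn_const.mul hker.continuousOn).mul
      (hf.mono (Set.Icc_subset_Icc hz.1 le_rfl))
  have i1 : ∫ y in a..z,
      f z * (Real.sinh (min z y - a) * Real.sinh (b - max z y) / Real.sinh (b - a)) * f y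
      = (f z * Real.sinh (b - z) / Real.sinh (b - a)) * inkQ a f z := by
    unfold inkQ
    rw [← intervalIntegral.integral_const_mul]
    apply intervalIntegral.integral_congr
    intro y hy
    rw [Set.uIcc_of_le hz.1] at hy
    simp only [min_eq_right hy.2, max_eq_left hy.2]
    ring
  have i2 : ∫ y in z..b,
      f z * (Real.sinh (min z y - a) * Real.sinh (b - max z y) / Real.sinh (b - a)) * f y
      = (f z * Real.sinh (z - a) / Real.sinh (b - a)) * inkP b f z := by
    unfold inkP
    rw [← intervalIntegral.integral_const_mul]
    apply intervalIntegral.integral_congr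
    intro y hy
    rw [Set.uIcc_of_le hz.2] at hy
    simp only [min_eq_left hy.1, max_eq_right hy.1]
    ring
  rw [← intervalIntegral.integral_add_adjacent_intervals hint1 hint2, i1, i2]
  unfold inkU
  ring

lemma ink_eq_zero_closure (hab : a < b) (hf : ContinuousOn f (Set.Icc a b))
    (h0 : ∀ x ∈ Set.Ioo a b, f x = 0) : ∀ x ∈ Set.Icc a b, f x = 0 := by
  intro x hx
  rcases lt_or_eq_of_le hx.1 with h1 | h1
  · rcases lt_or_eq_of_le hx.2 with h2 | h2
    · exact h0 x ⟨h1, h2⟩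
    · subst h2
      haveI : (nhdsWithin x (Set.Ioo a x)).NeBot := by
        apply mem_closure_iff_nhdsWithin_neBot.mp
        rw [closure_Ioo (ne_of_lt h1)]
        exact ⟨h1.le, le_refl x⟩
      have t1 : Filter.Tendsto f (nhdsWithin x (Set.Ioo a x)) (nhds (f x)) :=
        (hf x hx).mono Set.Ioo_subset_Icc_self
      have t2 : Filter.Tendsto f (nhdsWithin x (Set.Ioo a x)) (nhds 0) := by
        apply Filter.Tendsto.congr' _ tendsto_const_nhds
        filter_upwards [self_mem_nhdsWithin] with y hy
        exact (h0 y hy).symm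
      exact tendsto_nhds_unique t1 t2
  · subst h1
    haveI : (nhdsWithin a (Set.Ioo a b)).NeBot := by
      apply mem_closure_iff_nhdsWithin_neBot.mp
      rw [closure_Ioo (ne_of_lt hab)]
      exact ⟨le_refl a, hab.le⟩
    have t1 : Filter.Tendsto f (nhdsWithin a (Set.Ioo a b)) (nhds (f a)) :=
      (hf a hx).mono Set.Ioo_subset_Icc_self
    have t2 : Filter.Tendsto f (nhdsWithin a (Set.Ioo a b)) (nhds 0) := by
      apply Filter.Tendsto.congr' _ tendsto_const_nhds
      filter_upwards [self_mem_nhdsWithin] with y hy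
      exact (h0 y hy).symm
    exact tendsto_nhds_unique t1 t2

end aux

/-- The interior-node Green's function
`G(z,y) = sinh(min(z,y)-a)·sinh(b-max(z,y))/sinh(b-a)` is positive definite on `[a,b]`:
for every continuous `f : [a,b] → ℝ` not identically zero,
`∫ₐᵇ∫ₐᵇ f(z) G(z,y) f(y) dy dz > 0`. -/
theorem interior_node_kernel_positive_definite
    (a c b : ℝ) (hac : a < c) (hcb : c < b)
    (f : ℝ → ℝ) (hf : ContinuousOn f (Set.Icc a b))
    (hne : ∃ z ∈ Set.Icc a b, f z ≠ 0) :
    0 < ∫ z in a..b, ∫ y in a..b,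
          f z * (Real.sinh (min z y - a) * Real.sinh (b - max z y) / Real.sinh (b - a))
            * f y := by
  have hab : a < b := hac.trans hcb
  set U := inkU a b f with hU
  set V := inkV a b f with hV
  have hUc : ContinuousOn U (Set.Icc a b) := inkU_cont hab.le hf
  have hVc : ContinuousOn V (Set.Icc a b) := inkV_cont hab.le hf
  -- rewrite the double integral
  have step1 : (∫ z in a..b, ∫ y in a..b,
      f z * (Real.sinh (min z y - a) * Real.sinh (b - max z y) / Real.sinh (b - a)) * f y)
      = ∫ z in a..b, f z * U z := by
    apply intervalIntegral.integral_congr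
    intro z hz
    rw [Set.uIcc_of_le hab.le] at hz
    exact ink_inner hab.le hf hz
  -- integration by parts identity
  have hfU_int : IntervalIntegrable (fun x => f x * U x) MeasureTheory.volume a b :=
    (hf.mul hUc).intervalIntegrable_of_Icc hab.le
  have hsq_int : IntervalIntegrable (fun x => U x * U x + V x * V x) MeasureTheory.volume a b :=
    ((hUc.mul hUc).add (hVc.mul hVc)).intervalIntegrable_of_Icc hab.le
  have key : (∫ x in a..b, ((U x * U x + V x * V x) - f x * U x)) = 0 := by
    have hderiv : ∀ x ∈ Set.Ioo a b,
        HasDerivAt (fun y => V y * U y) ((U x * U x + V x * V x) - f x * U x) x := by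
      intro x hx
      have h := (inkV_deriv hab hf hx).mul (inkU_deriv hab.le hf hx)
      refine h.congr_deriv (Eq.symm ?_)
      ring
    have hint : IntervalIntegrable (fun x => (U x * U x + V x * V x) - f x * U x)
        MeasureTheory.volume a b := hsq_int.sub hfU_int
    have := intervalIntegral.integral_eq_sub_of_hasDerivAt_of_le hab.le
      (hVc.mul hUc) hderiv hint
    rw [this, hU, Pi.mul_apply, Pi.mul_apply, inkU_a, inkU_b]
    ring
  have step2 : (∫ z in a..b, f z * U z) = ∫ x in a..b, (U x * U x + V x * V x) := by
    have := intervalIntegral.integral_sub hsq_int hfU_int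
    rw [key] at this
    linarith [this]
  -- find a point where U or V is nonzero
  have hpoint : ∃ x₀ ∈ Set.Icc a b, 0 < U x₀ * U x₀ + V x₀ * V x₀ := by
    by_contra hcon
    push_neg at hcon
    have hzeroUV : ∀ x ∈ Set.Icc a b, U x = 0 ∧ V x = 0 := by
      intro x hx
      have := hcon x hx
      constructor <;> nlinarith [mul_self_nonneg (U x), mul_self_nonneg (V x)]
    have hfzero : ∀ x ∈ Set.Ioo a b, f x = 0 := by
      intro x hx
      have h0 : HasDerivAt V 0 x := by
        refine HasDerivAt.congr_of_eventuallyEq (hasDerivAt_const x (0 : ℝ)) ?_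
        filter_upwards [Icc_mem_nhds hx.1 hx.2] with y hy
        exact (hzeroUV y hy).2
      have := (inkV_deriv hab hf hx).unique h0
      have hUx : U x = 0 := (hzeroUV x (Set.Ioo_subset_Icc_self hx)).1
      rw [hU] at hUx
      linarith [this, hUx]
    -- extend to endpoints by continuity
    have hclosure : ∀ x ∈ Set.Icc a b, f x = 0 := ink_eq_zero_closure hab hf hfzero
    obtain ⟨z, hz, hzne⟩ := hne
    exact hzne (hclosure z hz)
  obtain ⟨x₀, hx₀, hpos⟩ := hpoint
  have final : 0 < ∫ x in a..b, (U x * U x + V x * V x) := by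
    apply intervalIntegral.integral_pos hab
    · exact (hUc.mul hUc).add (hVc.mul hVc)
    · intro x hx
      nlinarith [mul_self_nonneg (U x), mul_self_nonneg (V x)]
    · exact ⟨x₀, hx₀, hpos⟩
  rw [step1, step2]
  exact final
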